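/- arXiv:2603.02400 — 2 statements merged into one kernel-verified Lean document; each statement's English description precedes it below -/
import Mathlib

section
/- Let T be a bidirected tree rooted at a vertex z, let r be a converging request and r' a diverging request in T. Then r and r' interfere if and only if s_r and t_{r'} are not related. -/
open SimpleGraph

/-- A request in a bidirected tree `T`: a directed path of length at least 1,
encoded as a path (walk without vertex repetition) in the underlying tree. -/
structure Request {V : Type*} (T : SimpleGraph V) where
  s : V
  t : V
  toWalk : T.Walk s t
  isPath : toWalk.IsPath
  one_le_length : 1 ≤ toWalk.length

namespace Request

variable {V : Type*} {T : SimpleGraph V}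

/-- The second vertex `s_r⁺` of a request. -/
def sPlus (r : Request T) : V := r.toWalk.getVert 1

/-- The penultimate vertex `t_r⁻` of a request. -/
def tMinus (r : Request T) : V := r.toWalk.getVert (r.toWalk.length - 1)

end Request

variable {V : Type*}

/-- `r` interferes on `r'` if the unique path from `s_r` to `t_{r'}` in the tree `T`
has first arc the emission arc of `r` and last arc the reception arc of `r'`. -/
def InterferesOn (T : SimpleGraph V) (r r' : Request T) : Prop :=
  ∃ p : T.Walk r.s r'.t, p.IsPath ∧ 1 ≤ p.length ∧
    p.getVert 1 = r.sPlus ∧ p.getVert (p.length - 1) = r'.tMinus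

/-- Two requests interfere if one of them interferes on the other. -/
def Interfere (T : SimpleGraph V) (r r' : Request T) : Prop :=
  InterferesOn T r r' ∨ InterferesOn T r' r

/-- `x` is an ancestor of `y` in the tree `T` rooted at `z`:
`x` lies on the unique path from `z` to `y`. -/
def Ancestor (T : SimpleGraph V) (z x y : V) : Prop :=
  ∃ p : T.Walk z y, p.IsPath ∧ x ∈ p.support

/-- Two vertices are related if one is an ancestor of the other. -/
def Related (T : SimpleGraph V) (z x y : V) : Prop :=
  Ancestor T z x y ∨ Ancestor T z y x

/-- A request is converging (w.r.t. root `z`) if all its arcs are directed towards `z`,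
i.e. the head of every arc is an ancestor of its tail. -/
def Converging (T : SimpleGraph V) (z : V) (r : Request T) : Prop :=
  ∀ i < r.toWalk.length, Ancestor T z (r.toWalk.getVert (i+1)) (r.toWalk.getVert i)

/-- A request is diverging (w.r.t. root `z`) if all its arcs are directed away from `z`,
i.e. the tail of every arc is an ancestor of its head. -/
def Diverging (T : SimpleGraph V) (z : V) (r : Request T) : Prop :=
  ∀ i < r.toWalk.length, Ancestor T z (r.toWalk.getVert i) (r.toWalk.getVert (i+1))

/-- A request is unimodal (w.r.t. root `z`) if it is neither converging nor diverging. -/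
def Unimodal (T : SimpleGraph V) (z : V) (r : Request T) : Prop :=
  ¬ Converging T z r ∧ ¬ Diverging T z r

/-- `m` is the middle of the request `r` (w.r.t. root `z`): the vertex of `r`
closest to the root, i.e. the vertex of `r` which is an ancestor of every vertex of `r`. -/
def IsMiddle (T : SimpleGraph V) (z : V) (r : Request T) (m : V) : Prop :=
  m ∈ r.toWalk.support ∧ ∀ y ∈ r.toWalk.support, Ancestor T z m y

/-- The interference graph of a family of requests: two (indices of) requests are
adjacent iff they are distinct and the requests interfere. -/
def interferenceGraph (T : SimpleGraph V) {ι : Type*} (f : ι → Request T) :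
    SimpleGraph ι where
  Adj i j := i ≠ j ∧ Interfere T (f i) (f j)
  symm := by
    constructor
    intro i j h
    exact ⟨h.1.symm, h.2.symm⟩
  loopless := by
    constructor
    intro i h
    exact h.1 rfl

/-- The interference graph of a set of requests. -/
def interGraph (T : SimpleGraph V) (R : Set (Request T)) : SimpleGraph ↥R :=
  interferenceGraph T (fun r => (r : Request T))

/-- The pair `(a, b)` is an arc joining two consecutive vertices of the
bidirected path corresponding to the walk `p` (in either direction). -/
def ArcOn (T : SimpleGraph V) {u v : V} (p : T.Walk u v) (a b : V) : Prop :=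
  ∃ j < p.length, (p.getVert j = a ∧ p.getVert (j+1) = b) ∨
    (p.getVert j = b ∧ p.getVert (j+1) = a)

/-- The request `r` shares an arc with the bidirected path corresponding to
the walk `p`. -/
def SharesArc (T : SimpleGraph V) {u v : V} (p : T.Walk u v) (r : Request T) : Prop :=
  ∃ i < r.toWalk.length, ArcOn T p (r.toWalk.getVert i) (r.toWalk.getVert (i+1))

/-- A leaf of a tree: a vertex with at most one neighbour. -/
def IsLeaf (T : SimpleGraph V) (y : V) : Prop :=
  {w | T.Adj y w}.Subsingleton

/-- A comparability graph: there is a partial order on the vertices such that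
two distinct vertices are adjacent iff they are comparable. -/
def IsComparabilityGraph {α : Type*} (G : SimpleGraph α) : Prop :=
  ∃ le : α → α → Prop, IsPartialOrder α le ∧ ∀ a b, G.Adj a b ↔ a ≠ b ∧ (le a b ∨ le b a)

/-- A cobipartite graph: the vertex set can be partitioned into two cliques. -/
def IsCobipartite {α : Type*} (G : SimpleGraph α) : Prop :=
  ∃ A : Set α, G.IsClique A ∧ G.IsClique Aᶜ

namespace TreeAux

variable {V : Type*} {T : SimpleGraph V}

lemma tpu (hT : T.IsTree) {u v : V} {p q : T.Walk u v}
    (hp : p.IsPath) (hq : q.IsPath) : p = q :=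
  (hT.existsUnique_path u v).unique hp hq

lemma texists (hT : T.IsTree) (u v : V) : ∃ p : T.Walk u v, p.IsPath :=
  (hT.existsUnique_path u v).exists

lemma getVert_inj : ∀ {u v : V} (p : T.Walk u v), p.IsPath →
    ∀ i j, i ≤ p.length → j ≤ p.length → p.getVert i = p.getVert j → i = j := by
  intro u v p
  induction p with
  | nil => intro _ i j hi hj _; simp only [Walk.length_nil, Nat.le_zero] at hi hj; omega
  | cons h q ih =>
    intro hp i j hi hj hij
    rw [Walk.cons_isPath_iff] at hp
    simp only [Walk.length_cons] at hi hj
    match i, j with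
    | 0, 0 => rfl
    | 0, j+1 =>
      exfalso; apply hp.2
      rw [Walk.mem_support_iff_exists_getVert]
      refine ⟨j, ?_, by omega⟩
      rw [Walk.getVert_cons_succ] at hij
      rw [← hij, Walk.getVert_zero]
    | i+1, 0 =>
      exfalso; apply hp.2
      rw [Walk.mem_support_iff_exists_getVert]
      refine ⟨i, ?_, by omega⟩
      rw [Walk.getVert_cons_succ] at hij
      rw [hij, Walk.getVert_zero]
    | i+1, j+1 =>
      rw [Walk.getVert_cons_succ, Walk.getVert_cons_succ] at hij
      have := ih hp.1 i j (by omega) (by omega) hij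
      omega

lemma loop_length_zero {u : V} {p : T.Walk u u} (hp : p.IsPath) : p.length = 0 := by
  have := getVert_inj p hp 0 p.length (Nat.zero_le _) le_rfl
    (by rw [Walk.getVert_zero, Walk.getVert_length])
  omega

lemma path_ne {u v : V} {p : T.Walk u v} (hp : p.IsPath) (hl : 1 ≤ p.length) : u ≠ v := by
  intro h; subst h; have := loop_length_zero hp; omega

lemma length_pos_of_ne {u v : V} (p : T.Walk u v) (h : u ≠ v) : 1 ≤ p.length := by
  rcases Nat.eq_zero_or_pos p.length with h0 | h0
  · exact absurd (Walk.eq_of_length_eq_zero h0) h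
  · omega

lemma ancestor_iff (hT : T.IsTree) {z x y : V} {p : T.Walk z y} (hp : p.IsPath) :
    Ancestor T z x y ↔ x ∈ p.support :=
  ⟨fun ⟨q, hq, hm⟩ => tpu hT hq hp ▸ hm, fun h => ⟨p, hp, h⟩⟩

lemma ancestor_self (hT : T.IsTree) (z x : V) : Ancestor T z x x := by
  obtain ⟨p, hp⟩ := texists hT z x
  exact ⟨p, hp, Walk.end_mem_support p⟩

lemma ancestor_z (hT : T.IsTree) {z a : V} (h : Ancestor T z a z) : a = z := by
  obtain ⟨p, hp, hm⟩ := h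
  have h0 := loop_length_zero hp
  rw [Walk.mem_support_iff_exists_getVert] at hm
  obtain ⟨n, hn, hle⟩ := hm
  rw [h0, Nat.le_zero] at hle
  subst hle
  rw [Walk.getVert_zero] at hn
  exact hn.symm

lemma meet (hT : T.IsTree) :
    ∀ {x z : V} (a : T.Walk x z), a.IsPath → ∀ {y : V} (b : T.Walk z y), b.IsPath →
    ∃ (m : V) (pz : T.Walk z m) (px : T.Walk m x) (py : T.Walk m y),
      (pz.append px).IsPath ∧ (pz.append py).IsPath ∧ (px.reverse.append py).IsPath := by
  classical
  intro x z a
  induction a with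
  | nil =>
    intro _ y b hb
    exact ⟨_, Walk.nil, Walk.nil, b, by
      simpa using Walk.IsPath.nil, by simpa using hb, by simpa using hb⟩
  | @cons x w _ h a' ih =>
    intro ha y b hb
    rw [Walk.cons_isPath_iff] at ha
    obtain ⟨m, pz, px', py, h1, h2, h3⟩ := ih ha.1 b hb
    by_cases hx : x ∈ py.support
    · refine ⟨x, pz.append (py.takeUntil x hx), Walk.nil, py.dropUntil x hx, ?_, ?_, ?_⟩
      · rw [Walk.append_nil]
        have : (pz.append ((py.takeUntil x hx).append (py.dropUntil x hx))).IsPath := by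
          rw [Walk.take_spec]; exact h2
        rw [Walk.append_assoc] at this
        exact this.of_append_left
      · rw [← Walk.append_assoc, Walk.take_spec]; exact h2
      · simpa using (h3.of_append_right).dropUntil hx
    · -- x not in py, and x not in pz ++ px' either
      have hxnot : x ∉ (pz.append px').support := by
        have hrev : (pz.append px').reverse = a' := by
          apply tpu hT h1.reverse ha.1
        intro hmem
        apply ha.2
        have : x ∈ (pz.append px').reverse.support := by
          rw [Walk.support_reverse, List.mem_reverse]; exact hmem
        rwa [hrev] at this
      refine ⟨m, pz, px'.concat h.symm, py, ?_, h2, ?_⟩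
      · rw [Walk.append_concat]
        rw [← Walk.isPath_reverse_iff, Walk.reverse_concat]
        refine Walk.IsPath.cons h1.reverse ?_
        rw [Walk.support_reverse, List.mem_reverse]
        exact hxnot
      · rw [Walk.reverse_concat, Walk.cons_append]
        refine Walk.IsPath.cons h3 ?_
        rw [Walk.mem_support_append_iff]
        rintro (hc | hc)
        · rw [Walk.support_reverse, List.mem_reverse] at hc
          exact hxnot (by rw [Walk.mem_support_append_iff]; right; exact hc)
        · exact hx hc

lemma ancestor_iff_nil (hT : T.IsTree) {z x y m : V}
    {pz : T.Walk z m} {px : T.Walk m x} {py : T.Walk m y}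
    (h1 : (pz.append px).IsPath) (h2 : (pz.append py).IsPath)
    (h3 : (px.reverse.append py).IsPath) :
    Ancestor T z x y ↔ px.length = 0 := by
  constructor
  · intro hA
    rw [ancestor_iff hT h2, Walk.mem_support_iff_exists_getVert] at hA
    obtain ⟨n, hn, hnle⟩ := hA
    rw [Walk.length_append] at hnle
    by_cases hlt : n < pz.length
    · exfalso
      have e1 : (pz.append px).getVert n = x := by
        rw [Walk.getVert_append, if_pos hlt]
        rw [Walk.getVert_append, if_pos hlt] at hn
        exact hn
      have e2 : (pz.append px).getVert (pz.length + px.length) = x := by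
        rw [← Walk.length_append, Walk.getVert_length]
      have := getVert_inj _ h1 n (pz.length + px.length)
        (by rw [Walk.length_append]; omega) (by rw [Walk.length_append]) (e1.trans e2.symm)
      omega
    · have e1 : (px.reverse.append py).getVert (px.length + (n - pz.length)) = x := by
        rw [Walk.getVert_append, Walk.length_reverse, if_neg (by omega)]
        rw [Walk.getVert_append, if_neg hlt] at hn
        rw [Nat.add_sub_cancel_left]
        exact hn
      have e0 : (px.reverse.append py).getVert 0 = x := Walk.getVert_zero _
      have := getVert_inj _ h3 0 (px.length + (n - pz.length)) (Nat.zero_le _)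
        (by rw [Walk.length_append, Walk.length_reverse]; omega) (e0.trans e1.symm)
      omega
  · intro h0
    have hmx : m = x := Walk.eq_of_length_eq_zero h0
    rw [ancestor_iff hT h2, Walk.mem_support_append_iff]
    left
    exact hmx ▸ Walk.end_mem_support pz

lemma meet_symm {x y m : V} {px : T.Walk m x} {py : T.Walk m y}
    (h3 : (px.reverse.append py).IsPath) : (py.reverse.append px).IsPath := by
  rw [← Walk.isPath_reverse_iff] at h3
  rw [Walk.reverse_append, Walk.reverse_reverse] at h3
  exact h3

lemma ancestor_antisymm (hT : T.IsTree) {z x y : V}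
    (hxy : Ancestor T z x y) (hyx : Ancestor T z y x) : x = y := by
  obtain ⟨a, ha⟩ := texists hT x z
  obtain ⟨b, hb⟩ := texists hT z y
  obtain ⟨m, pz, px, py, h1, h2, h3⟩ := meet hT a ha b hb
  have e1 : px.length = 0 := (ancestor_iff_nil hT h1 h2 h3).1 hxy
  have e2 : py.length = 0 := (ancestor_iff_nil hT h2 h1 (meet_symm h3)).1 hyx
  rw [← Walk.eq_of_length_eq_zero e1, ← Walk.eq_of_length_eq_zero e2]

lemma first_arc (hT : T.IsTree) {z x y : V} (hxy : x ≠ y) (hxz : x ≠ z)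
    {p : T.Walk x y} (hp : p.IsPath) {q : T.Walk x z} (hq : q.IsPath) :
    p.getVert 1 = q.getVert 1 ↔ ¬ Ancestor T z x y := by
  obtain ⟨b, hb⟩ := texists hT z y
  obtain ⟨m, pz, px, py, h1, h2, h3⟩ := meet hT q hq b hb
  have hanc := ancestor_iff_nil hT h1 h2 h3
  have hpeq : p = px.reverse.append py := tpu hT hp h3
  have hqeq : q = (pz.append px).reverse := tpu hT hq h1.reverse
  by_cases h0 : px.length = 0
  · -- ancestor holds; getVert 1's differ
    have hmx : m = x := Walk.eq_of_length_eq_zero h0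
    have hpz1 : 1 ≤ pz.length := length_pos_of_ne pz (by rw [hmx]; exact fun h => hxz h.symm)
    have hpy1 : 1 ≤ py.length := length_pos_of_ne py (hmx ▸ hxy)
    have ep : p.getVert 1 = py.getVert 1 := by
      rw [hpeq, Walk.getVert_append, Walk.length_reverse, h0]
      simp
    have eq1 : q.getVert 1 = pz.getVert (pz.length - 1) := by
      rw [hqeq, Walk.getVert_reverse, Walk.length_append, h0, Nat.add_zero,
        Walk.getVert_append, if_pos (by omega)]
    constructor
    · intro heq
      exfalso
      have e1 : (pz.append py).getVert (pz.length - 1) = pz.getVert (pz.length - 1) := by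
        rw [Walk.getVert_append, if_pos (by omega)]
      have e2 : (pz.append py).getVert (pz.length + 1) = py.getVert 1 := by
        rw [Walk.getVert_append, if_neg (by omega), Nat.add_sub_cancel_left]
      have := getVert_inj _ h2 (pz.length - 1) (pz.length + 1)
        (by rw [Walk.length_append]; omega) (by rw [Walk.length_append]; omega)
        (by rw [e1, e2, ← ep, ← eq1, heq])
      omega
    · intro hna
      exact absurd (hanc.2 h0) hna
  · -- not ancestor; getVert 1's equal
    have ep : p.getVert 1 = px.getVert (px.length - 1) := by
      rw [hpeq, Walk.getVert_append, Walk.length_reverse]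
      by_cases h11 : 1 < px.length
      · rw [if_pos h11, Walk.getVert_reverse]
      · have hx1 : px.length = 1 := by omega
        rw [if_neg h11, hx1]
        simp [Walk.getVert_zero]
    have eq1 : q.getVert 1 = px.getVert (px.length - 1) := by
      rw [hqeq, Walk.getVert_reverse, Walk.length_append,
        Walk.getVert_append, if_neg (by omega)]
      congr 1
      omega
    simp only [ep, eq1, true_iff]
    rw [hanc]
    exact h0

lemma parent_anc (hT : T.IsTree) {z v : V} {q : T.Walk v z} (hq : q.IsPath)
    (h1 : 1 ≤ q.length) : Ancestor T z (q.getVert 1) v := by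
  refine ⟨q.reverse, hq.reverse, ?_⟩
  rw [Walk.support_reverse, List.mem_reverse, Walk.mem_support_iff_exists_getVert]
  exact ⟨1, rfl, h1⟩

lemma parent_spec (hT : T.IsTree) {z w v : V} (hA : Ancestor T z w v)
    (hne : w ≠ v) (hadj : T.Adj v w) :
    v ≠ z ∧ ∀ (q : T.Walk v z), q.IsPath → q.getVert 1 = w := by
  classical
  obtain ⟨pa, hpa, hw⟩ := hA
  have hvz : v ≠ z := by
    intro hv
    subst hv
    exact hne (ancestor_z hT ⟨pa, hpa, hw⟩)
  refine ⟨hvz, ?_⟩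
  have hdrop : pa.dropUntil w hw = Walk.cons hadj.symm Walk.nil := by
    apply tpu hT (hpa.dropUntil hw)
    exact Walk.IsPath.cons Walk.IsPath.nil (by simpa using hne)
  have hpa' : pa = (pa.takeUntil w hw).concat hadj.symm := by
    conv_lhs => rw [← Walk.take_spec pa hw]
    rw [hdrop, Walk.concat_eq_append]
  intro q hq
  obtain ⟨t, ht⟩ : ∃ t : T.Walk z w, pa = t.concat hadj.symm := ⟨_, hpa'⟩
  have hqeq : q = pa.reverse := tpu hT hq hpa.reverse
  rw [hqeq, ht, Walk.reverse_concat, Walk.getVert_cons_succ, Walk.getVert_zero]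

lemma conv_start (hT : T.IsTree) {z : V} {r : Request T} (hr : Converging T z r) :
    r.s ≠ z ∧ ∀ q : T.Walk r.s z, q.IsPath → q.getVert 1 = r.sPlus := by
  have hlen : 0 < r.toWalk.length := r.one_le_length
  have hanc : Ancestor T z r.sPlus r.s := by
    have := hr 0 hlen
    rw [Walk.getVert_zero] at this
    exact this
  have hadj : T.Adj r.s r.sPlus := by
    have := r.toWalk.adj_getVert_succ hlen
    rw [Walk.getVert_zero] at this
    exact this
  exact parent_spec hT hanc hadj.ne' hadj

lemma div_end (hT : T.IsTree) {z : V} {r' : Request T} (hr' : Diverging T z r') :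
    r'.t ≠ z ∧ ∀ q : T.Walk r'.t z, q.IsPath → q.getVert 1 = r'.tMinus := by
  have hlen : 1 ≤ r'.toWalk.length := r'.one_le_length
  have hL : r'.toWalk.length - 1 + 1 = r'.toWalk.length := by omega
  have hanc : Ancestor T z r'.tMinus r'.t := by
    have := hr' (r'.toWalk.length - 1) (by omega)
    rw [hL, Walk.getVert_length] at this
    exact this
  have hadj : T.Adj r'.t r'.tMinus := by
    have := r'.toWalk.adj_getVert_succ (i := r'.toWalk.length - 1) (by omega)
    rw [hL, Walk.getVert_length] at this
    exact this.symm
  exact parent_spec hT hanc hadj.ne' hadj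

lemma div_start (hT : T.IsTree) {z : V} {r' : Request T} (hr' : Diverging T z r') :
    Ancestor T z r'.s r'.sPlus ∧ r'.sPlus ≠ r'.s := by
  have hlen : 0 < r'.toWalk.length := r'.one_le_length
  have hanc : Ancestor T z r'.s r'.sPlus := by
    have := hr' 0 hlen
    rw [Walk.getVert_zero] at this
    exact this
  have hadj : T.Adj r'.s r'.sPlus := by
    have := r'.toWalk.adj_getVert_succ hlen
    rw [Walk.getVert_zero] at this
    exact this
  exact ⟨hanc, hadj.ne'⟩

lemma conv_end (hT : T.IsTree) {z : V} {r : Request T} (hr : Converging T z r) :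
    Ancestor T z r.t r.tMinus ∧ r.tMinus ≠ r.t := by
  have hlen : 1 ≤ r.toWalk.length := r.one_le_length
  have hL : r.toWalk.length - 1 + 1 = r.toWalk.length := by omega
  have hanc : Ancestor T z r.t r.tMinus := by
    have := hr (r.toWalk.length - 1) (by omega)
    rw [hL, Walk.getVert_length] at this
    exact this
  have hadj : T.Adj r.tMinus r.t := by
    have := r.toWalk.adj_getVert_succ (i := r.toWalk.length - 1) (by omega)
    rw [hL, Walk.getVert_length] at this
    exact this
  exact ⟨hanc, hadj.ne⟩

end TreeAux



/-- Lemma 1(iii): a converging request `r` and a diverging request `r'`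
interfere iff `s_r` and `t_{r'}` are not related. -/
theorem conv_div_interfere_iff {V : Type*} (T : SimpleGraph V) (hT : T.IsTree)
    (z : V) (r r' : Request T)
    (hr : Converging T z r) (hr' : Diverging T z r') :
    Interfere T r r' ↔ ¬ Related T z r.s r'.t := by
  classical
  obtain ⟨hsz, hsq⟩ := TreeAux.conv_start hT hr
  obtain ⟨htz, htq⟩ := TreeAux.div_end hT hr'
  constructor
  · rintro (⟨p, hp, hlen, h1, h2⟩ | ⟨p, hp, hlen, h1, h2⟩) hR
    · -- InterferesOn r r' : contradicts Related
      have hxy : r.s ≠ r'.t := TreeAux.path_ne hp hlen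
      rcases hR with hA | hA
      · obtain ⟨q, hq⟩ := TreeAux.texists hT r.s z
        have hiff := TreeAux.first_arc hT hxy hsz hp hq
        rw [h1, hsq q hq] at hiff
        exact (hiff.1 rfl) hA
      · obtain ⟨q', hq'⟩ := TreeAux.texists hT r'.t z
        have hiff := TreeAux.first_arc hT hxy.symm htz hp.reverse hq'
        rw [Walk.getVert_reverse, h2, htq q' hq'] at hiff
        exact (hiff.1 rfl) hA
    · -- InterferesOn r' r : impossible
      clear hR
      have huw : r'.s ≠ r.t := TreeAux.path_ne hp hlen
      obtain ⟨hAu, hneu⟩ := TreeAux.div_start hT hr'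
      obtain ⟨hAw, hnew⟩ := TreeAux.conv_end hT hr
      have claimA : r'.s ≠ z → Ancestor T z r'.s r.t := by
        intro huz
        obtain ⟨q, hq⟩ := TreeAux.texists hT r'.s z
        have hq1 : 1 ≤ q.length := TreeAux.length_pos_of_ne q huz
        have hpar : Ancestor T z (q.getVert 1) r'.s := TreeAux.parent_anc hT hq hq1
        have hne : p.getVert 1 ≠ q.getVert 1 := by
          intro he
          rw [h1] at he
          rw [← he] at hpar
          exact hneu (TreeAux.ancestor_antisymm hT hpar hAu)
        have hiff := TreeAux.first_arc hT huw huz hp hq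
        by_contra hna
        exact hne (hiff.2 hna)
      have claimB : r.t ≠ z → Ancestor T z r.t r'.s := by
        intro hwz
        obtain ⟨q, hq⟩ := TreeAux.texists hT r.t z
        have hq1 : 1 ≤ q.length := TreeAux.length_pos_of_ne q hwz
        have hpar : Ancestor T z (q.getVert 1) r.t := TreeAux.parent_anc hT hq hq1
        have hne : p.reverse.getVert 1 ≠ q.getVert 1 := by
          intro he
          rw [Walk.getVert_reverse, h2] at he
          rw [← he] at hpar
          exact hnew (TreeAux.ancestor_antisymm hT hpar hAw)
        have hiff := TreeAux.first_arc hT huw.symm hwz hp.reverse hq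
        by_contra hna
        exact hne (hiff.2 hna)
      by_cases huz : r'.s = z
      · have hwz : r.t ≠ z := fun h => huw (huz.trans h.symm)
        have := claimB hwz
        rw [huz] at this
        exact hwz (TreeAux.ancestor_z hT this)
      · have hAuw := claimA huz
        by_cases hwz : r.t = z
        · rw [hwz] at hAuw
          exact huz (TreeAux.ancestor_z hT hAuw)
        · exact huw (TreeAux.ancestor_antisymm hT hAuw (claimB hwz))
  · intro hR
    rw [Related, not_or] at hR
    obtain ⟨hA1, hA2⟩ := hR
    have hxy : r.s ≠ r'.t := by
      intro h
      exact hA1 (by rw [h]; exact TreeAux.ancestor_self hT z r'.t)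
    left
    obtain ⟨p, hp⟩ := TreeAux.texists hT r.s r'.t
    obtain ⟨q, hq⟩ := TreeAux.texists hT r.s z
    obtain ⟨q', hq'⟩ := TreeAux.texists hT r'.t z
    refine ⟨p, hp, TreeAux.length_pos_of_ne p hxy, ?_, ?_⟩
    · rw [(TreeAux.first_arc hT hxy hsz hp hq).2 hA1]
      exact hsq q hq
    · have := (TreeAux.first_arc hT hxy.symm htz hp.reverse hq').2 hA2
      rw [Walk.getVert_reverse] at this
      rw [this]
      exact htq q' hq'
end

section
/- Let T be a bidirected tree rooted at a vertex z, let r be a unimodal request and r' a diverging request in T. Then r and r' do not interfere if and only if m_r is an ancestor of s_{r'} and s_r and t_{r'} are related. -/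
open SimpleGraph

variable {V : Type*}

section TreeAux

open SimpleGraph Walk

variable {V' : Type*} {T : SimpleGraph V'}

/-- The unique path between two vertices of a tree. -/
noncomputable def tpath (hT : T.IsTree) (x y : V') : T.Walk x y :=
  ((hT.existsUnique_path x y).exists).choose

lemma tpath_isPath (hT : T.IsTree) (x y : V') : (tpath hT x y).IsPath :=
  ((hT.existsUnique_path x y).exists).choose_spec

lemma path_eq_tpath (hT : T.IsTree) {x y : V'} {p : T.Walk x y} (hp : p.IsPath) :
    p = tpath hT x y :=
  (hT.existsUnique_path x y).unique hp (tpath_isPath hT x y)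

lemma path_unique (hT : T.IsTree) {x y : V'} {p q : T.Walk x y}
    (hp : p.IsPath) (hq : q.IsPath) : p = q :=
  (hT.existsUnique_path x y).unique hp hq

lemma getVert_mem_support' {x y : V'} (p : T.Walk x y) (i : ℕ) :
    p.getVert i ∈ p.support := by
  rcases le_or_gt i p.length with h | h
  · exact Walk.mem_support_iff_exists_getVert.mpr ⟨i, rfl, h⟩
  · rw [p.getVert_of_length_le h.le]; exact Walk.end_mem_support _

lemma getVert_inj' {x y : V'} {p : T.Walk x y} (hp : p.IsPath) :
    ∀ {i j : ℕ}, i ≤ p.length → j ≤ p.length → p.getVert i = p.getVert j → i = j := by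
  induction p with
  | nil =>
    intro i j hi hj _
    simp only [Walk.length_nil, Nat.le_zero] at hi hj
    omega
  | cons ha q ih =>
    intro i j hi hj h
    match i, j with
    | 0, 0 => rfl
    | 0, (j+1) =>
      exfalso
      rw [Walk.getVert_zero, Walk.getVert_cons_succ] at h
      exact ((Walk.cons_isPath_iff _ _).1 hp).2 (h ▸ getVert_mem_support' q j)
    | (i+1), 0 =>
      exfalso
      rw [Walk.getVert_zero, Walk.getVert_cons_succ] at h
      exact ((Walk.cons_isPath_iff _ _).1 hp).2 (h ▸ getVert_mem_support' q i)
    | (i+1), (j+1) =>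
      rw [Walk.getVert_cons_succ, Walk.getVert_cons_succ] at h
      rw [Walk.length_cons] at hi hj
      exact congrArg (· + 1) (ih hp.of_cons (by omega) (by omega) h)

variable (hT : T.IsTree) (z : V')

include hT

lemma anc_iff {x y : V'} : Ancestor T z x y ↔ x ∈ (tpath hT z y).support := by
  constructor
  · rintro ⟨p, hp, hx⟩
    rwa [path_eq_tpath hT hp] at hx
  · intro h
    exact ⟨tpath hT z y, tpath_isPath hT z y, h⟩

lemma anc_refl (x : V') : Ancestor T z x x :=
  ⟨tpath hT z x, tpath_isPath hT z x, Walk.end_mem_support _⟩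

lemma anc_trans {x y w : V'} (hxy : Ancestor T z x y) (hyw : Ancestor T z y w) :
    Ancestor T z x w := by
  classical
  rw [anc_iff hT] at hxy hyw ⊢
  have hq : ((tpath hT z w).takeUntil y hyw) = tpath hT z y :=
    path_eq_tpath hT ((tpath_isPath hT z w).takeUntil hyw)
  exact Walk.support_takeUntil_subset _ hyw (by rw [hq]; exact hxy)

lemma anc_antisymm {x y : V'} (hxy : Ancestor T z x y) (hyx : Ancestor T z y x) :
    x = y := by
  classical
  by_contra hne
  rw [anc_iff hT] at hxy hyx
  have hspec := (tpath hT z y).take_spec hxy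
  have hnd : ((tpath hT z y).support).Nodup := (tpath_isPath hT z y).support_nodup
  rw [← hspec, Walk.support_append] at hnd
  have h1 : y ∈ ((tpath hT z y).takeUntil x hxy).support := by
    rw [path_unique hT ((tpath_isPath hT z y).takeUntil hxy) (tpath_isPath hT z x)]
    exact hyx
  have h2 : y ∈ ((tpath hT z y).dropUntil x hxy).support.tail :=
    Walk.end_mem_tail_support_of_ne hne _
  exact (List.disjoint_of_nodup_append hnd) h1 h2

lemma adj_related {x y : V'} (h : T.Adj x y) :
    Ancestor T z x y ∨ Ancestor T z y x := by
  by_cases hx : x ∈ (tpath hT z y).support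
  · exact Or.inl ((anc_iff hT z).mpr hx)
  · right
    refine ⟨(tpath hT z y).concat h.symm, ?_, ?_⟩
    · apply Walk.IsPath.mk'
      rw [Walk.support_concat]
      exact List.Nodup.append (tpath_isPath hT z y).support_nodup (List.nodup_singleton x)
        (by simpa using hx)
    · rw [Walk.support_concat]
      exact List.mem_append_left _ (Walk.end_mem_support _)

lemma tpath_concat {x y : V'} (hanc : Ancestor T z x y) (h : T.Adj x y) :
    tpath hT z y = (tpath hT z x).concat h := by
  have hy : y ∉ (tpath hT z x).support := by
    intro hy
    exact h.ne (anc_antisymm hT z hanc ((anc_iff hT z).mpr hy))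
  symm
  apply path_eq_tpath hT
  apply Walk.IsPath.mk'
  rw [Walk.support_concat]
  exact List.Nodup.append (tpath_isPath hT z x).support_nodup (List.nodup_singleton y)
    (by simpa using hy)

lemma parent_unique {a b x : V'} (ha : T.Adj a x) (hb : T.Adj b x)
    (haa : Ancestor T z a x) (hba : Ancestor T z b x) : a = b := by
  have h1 := tpath_concat hT z haa ha
  have h2 := tpath_concat hT z hba hb
  exact (Walk.concat_inj (h1.symm.trans h2)).fst

lemma anc_comparable {x y w : V'} (hx : Ancestor T z x w) (hy : Ancestor T z y w) :
    Related T z x y := by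
  classical
  rw [anc_iff hT] at hx hy
  set p := tpath hT z w with hp
  have hspec := p.take_spec hy
  have hx' : x ∈ (p.takeUntil y hy).support ∨ x ∈ (p.dropUntil y hy).support.tail := by
    rw [← List.mem_append, ← Walk.support_append, hspec]
    exact hx
  rcases hx' with hx' | hx'
  · left
    rw [path_unique hT ((tpath_isPath hT z w).takeUntil hy) (tpath_isPath hT z y)] at hx'
    exact (anc_iff hT z).mpr hx'
  · right
    have hx'' : x ∈ (p.dropUntil y hy).support := List.mem_of_mem_tail hx'
    set q3 := (p.dropUntil y hy).takeUntil x hx''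
    have hsplit : ((p.takeUntil y hy).append q3).append ((p.dropUntil y hy).dropUntil x hx'') = p := by
      rw [← Walk.append_assoc, (p.dropUntil y hy).take_spec hx'', hspec]
    have hpath : ((p.takeUntil y hy).append q3).IsPath := by
      apply Walk.IsPath.of_append_left (q := (p.dropUntil y hy).dropUntil x hx'')
      rw [hsplit]; exact tpath_isPath hT z w
    refine ⟨(p.takeUntil y hy).append q3, hpath, ?_⟩
    rw [Walk.mem_support_append_iff]
    exact Or.inl (Walk.end_mem_support _)

lemma child_unique {m c1 c2 w : V'} (h1 : T.Adj m c1) (h2 : T.Adj m c2)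
    (ha1 : Ancestor T z m c1) (ha2 : Ancestor T z m c2)
    (hw1 : Ancestor T z c1 w) (hw2 : Ancestor T z c2 w) : c1 = c2 := by
  have key : ∀ (c c' : V'), T.Adj m c → T.Adj m c' → Ancestor T z m c → Ancestor T z m c' →
      Ancestor T z c c' → c = c' := by
    intro c c' hc hc' hmc hmc' hcc'
    have h := tpath_concat hT z hmc' hc'
    have hcm : c ∈ (tpath hT z c').support := (anc_iff hT z).mp hcc'
    rw [h, Walk.support_concat, List.mem_append] at hcm
    rcases hcm with hcm | hcm
    · exact absurd (anc_antisymm hT z ((anc_iff hT z).mpr hcm) hmc) hc.ne'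
    · simpa using hcm
  rcases anc_comparable hT z hw1 hw2 with h | h
  · exact key c1 c2 h1 h2 ha1 ha2 h
  · exact (key c2 c1 h2 h1 ha2 ha1 h).symm

/-- Along the unique path from an ancestor to a descendant, every arc goes
away from the root. -/
lemma descend {x y : V'} (p : T.Walk x y) (hp : p.IsPath) (hanc : Ancestor T z x y) :
    ∀ i < p.length, Ancestor T z (p.getVert i) (p.getVert (i+1)) := by
  classical
  induction p with
  | nil => intro i hi; simp at hi
  | @cons u w y ha q ih =>
    intro i hi
    have hu : u ∈ (tpath hT z y).support := (anc_iff hT z).mp hanc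
    have hdrop : (tpath hT z y).dropUntil u hu = Walk.cons ha q := by
      exact path_unique hT ((tpath_isPath hT z y).dropUntil hu) hp
    have hw_mem : w ∈ (tpath hT z y).support := by
      apply Walk.support_dropUntil_subset _ hu
      rw [hdrop]
      rw [Walk.support_cons]
      exact List.mem_cons_of_mem _ (Walk.start_mem_support q)
    have hanc_w : Ancestor T z w y := (anc_iff hT z).mpr hw_mem
    have huw : Ancestor T z u w := by
      rcases adj_related hT z ha with h | h
      · exact h
      · exfalso
        have hspec := (tpath hT z y).take_spec hu
        have hnd : ((tpath hT z y).support).Nodup := (tpath_isPath hT z y).support_nodup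
        rw [← hspec, Walk.support_append] at hnd
        have h1 : w ∈ ((tpath hT z y).takeUntil u hu).support := by
          rw [path_unique hT ((tpath_isPath hT z y).takeUntil hu) (tpath_isPath hT z u)]
          exact (anc_iff hT z).mp h
        have h2 : w ∈ ((tpath hT z y).dropUntil u hu).support.tail := by
          rw [hdrop, Walk.support_cons, List.tail_cons]
          exact Walk.start_mem_support q
        exact (List.disjoint_of_nodup_append hnd) h1 h2
    match i with
    | 0 => simpa using huw
    | (i+1) =>
      rw [Walk.getVert_cons_succ, Walk.getVert_cons_succ]
      exact ih hp.of_cons hanc_w i (by simpa using hi)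

/-- Transitivity chain along downward arcs. -/
lemma chain_anc {x y : V'} (p : T.Walk x y) {i j : ℕ}
    (hd : ∀ k, i ≤ k → k < j → Ancestor T z (p.getVert k) (p.getVert (k+1)))
    (hij : i ≤ j) : Ancestor T z (p.getVert i) (p.getVert j) := by
  induction j, hij using Nat.le_induction with
  | base => exact anc_refl hT z _
  | succ n hn ih =>
    exact anc_trans hT z (ih (fun k hk1 hk2 => hd k hk1 (by omega))) (hd n hn (by omega))

/-- Transitivity chain along upward arcs. -/
lemma chain_anc_up {x y : V'} (p : T.Walk x y) {i j : ℕ}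
    (hu : ∀ k, i ≤ k → k < j → Ancestor T z (p.getVert (k+1)) (p.getVert k))
    (hij : i ≤ j) : Ancestor T z (p.getVert j) (p.getVert i) := by
  induction j, hij using Nat.le_induction with
  | base => exact anc_refl hT z _
  | succ n hn ih =>
    exact anc_trans hT z (hu n hn (by omega)) (ih (fun k hk1 hk2 => hu k hk1 (by omega)))

/-- Once a path steps away from the root, it keeps going away from the root. -/
lemma step_down_succ {x y : V'} {p : T.Walk x y} (hp : p.IsPath) {i : ℕ}
    (h2 : i + 1 < p.length)
    (hd : Ancestor T z (p.getVert i) (p.getVert (i+1))) :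
    Ancestor T z (p.getVert (i+1)) (p.getVert (i+2)) := by
  rcases adj_related hT z (p.adj_getVert_succ h2) with h | h
  · exact h
  · exfalso
    have heq : p.getVert i = p.getVert (i+2) :=
      parent_unique hT z (p.adj_getVert_succ (by omega)) (p.adj_getVert_succ h2).symm hd h
    have := getVert_inj' hp (by omega) (by omega) heq
    omega

lemma step_down_from {x y : V'} {p : T.Walk x y} (hp : p.IsPath) {i0 : ℕ}
    (h0 : Ancestor T z (p.getVert i0) (p.getVert (i0+1))) :
    ∀ j, i0 ≤ j → j < p.length → Ancestor T z (p.getVert j) (p.getVert (j+1)) := by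
  intro j hj
  induction j, hj using Nat.le_induction with
  | base => intro _; exact h0
  | succ n hn ih =>
    intro hlen
    exact step_down_succ hT z hp hlen (ih (by omega))

/-- Structure of a unimodal request: it ascends towards its middle, then descends. -/
lemma unimodal_structure {r : Request T} (hr : Unimodal T z r) {m : V'}
    (hm : IsMiddle T z r m) :
    ∃ j0, 1 ≤ j0 ∧ j0 < r.toWalk.length ∧ m = r.toWalk.getVert j0 ∧
      (∀ i < j0, Ancestor T z (r.toWalk.getVert (i+1)) (r.toWalk.getVert i)) ∧
      (∀ i, j0 ≤ i → i < r.toWalk.length →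
        Ancestor T z (r.toWalk.getVert i) (r.toWalk.getVert (i+1))) := by
  classical
  set W := r.toWalk with hW
  set n := W.length with hn
  have hnr : r.toWalk.length = n := rfl
  have hex : ∃ i, i < n ∧ Ancestor T z (W.getVert i) (W.getVert (i+1)) := by
    have := hr.1
    rw [Converging] at this
    push_neg at this
    obtain ⟨i, hi, hni⟩ := this
    refine ⟨i, hi, ?_⟩
    rcases adj_related hT z (W.adj_getVert_succ hi) with h | h
    · exact h
    · exact absurd h hni
  let j0 := Nat.find hex
  have hj0 := Nat.find_spec hex
  have hmin : ∀ i < j0, ¬(i < n ∧ Ancestor T z (W.getVert i) (W.getVert (i+1))) :=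
    fun i hi => Nat.find_min hex hi
  have hdown : ∀ i, j0 ≤ i → i < n → Ancestor T z (W.getVert i) (W.getVert (i+1)) :=
    step_down_from hT z r.isPath hj0.2
  have hup : ∀ i < j0, Ancestor T z (W.getVert (i+1)) (W.getVert i) := by
    intro i hi
    have hin : i < n := lt_trans hi hj0.1
    rcases adj_related hT z (W.adj_getVert_succ hin) with h | h
    · exact absurd ⟨hin, h⟩ (hmin i hi)
    · exact h
  have hj1 : 1 ≤ j0 := by
    have := hr.2
    rw [Diverging] at this
    push_neg at this
    obtain ⟨i, hi, hni⟩ := this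
    by_contra h
    have hji : j0 ≤ i := by omega
    exact hni (hdown i hji hi)
  refine ⟨j0, hj1, hj0.1, ?_, hup, hdown⟩
  have h1 : Ancestor T z m (W.getVert j0) := hm.2 _ (getVert_mem_support' W j0)
  have h2 : Ancestor T z (W.getVert j0) m := by
    obtain ⟨i, hiv, hile⟩ := Walk.mem_support_iff_exists_getVert.mp hm.1
    rcases le_or_gt i j0 with h | h
    · rw [← hiv]
      exact chain_anc_up hT z W (fun k hk1 hk2 => hup k hk2) h
    · rw [← hiv]
      exact chain_anc hT z W (fun k hk1 hk2 => hdown k hk1 (by omega)) h.le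
  exact anc_antisymm hT z h1 h2

/-- Characterization: `r` interferes on `r'` iff `s_r` and `t_{r'}` are unrelated
(when the emission arc of `r` points to the root and the reception arc of `r'`
points away from the root). -/
lemma interferesOn_iff_not_related (r r' : Request T)
    (h1 : T.Adj r.s r.sPlus) (h2 : Ancestor T z r.sPlus r.s)
    (h3 : T.Adj r'.tMinus r'.t) (h4 : Ancestor T z r'.tMinus r'.t) :
    InterferesOn T r r' ↔ ¬ Related T z r.s r'.t := by
  constructor
  · rintro ⟨p, hp, hlen, hv1, hvl⟩ hrel
    have hne : r.s ≠ r'.t := by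
      intro h
      have h0 : (0:ℕ) = p.length := getVert_inj' hp (Nat.zero_le _) le_rfl
        (by rw [Walk.getVert_zero, Walk.getVert_length]; exact h)
      omega
    rcases hrel with hanc | hanc
    · have hstep := descend hT z p hp hanc 0 (by omega)
      rw [Walk.getVert_zero, hv1] at hstep
      exact h1.ne (anc_antisymm hT z hstep h2)
    · have hstep := descend hT z p.reverse hp.reverse hanc 0 (by rw [Walk.length_reverse]; omega)
      rw [Walk.getVert_zero, Walk.getVert_reverse] at hstep
      rw [show p.length - 1 = p.length - 1 from rfl, hvl] at hstep
      exact h3.ne (anc_antisymm hT z hstep h4).symm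
  · intro hnr
    have hne : r.s ≠ r'.t := by
      intro h
      exact hnr (Or.inl (h ▸ anc_refl hT z r.s))
    set p := tpath hT r.s r'.t with hpdef
    have hp : p.IsPath := tpath_isPath hT _ _
    have hlen : 1 ≤ p.length := by
      by_contra h
      exact hne (Walk.eq_of_length_eq_zero (p := p) (by omega))
    refine ⟨p, hp, hlen, ?_, ?_⟩
    · rcases adj_related hT z (p.adj_getVert_succ (i := 0) (by omega)) with h | h
      · exfalso
        apply hnr
        left
        have hall := step_down_from hT z hp (by simpa using h : Ancestor T z (p.getVert 0) (p.getVert 1))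
        have := chain_anc hT z p (fun k hk1 hk2 => hall k (by omega) hk2) (Nat.zero_le p.length)
        simpa using this
      · rw [Walk.getVert_zero] at h
        have hadj0 : T.Adj r.s (p.getVert 1) := by
          have := p.adj_getVert_succ (i := 0) (by omega)
          rwa [Walk.getVert_zero] at this
        exact parent_unique hT z hadj0.symm h1.symm h h2
    · set q := p.reverse with hq
      have hq1 : q.getVert 1 = p.getVert (p.length - 1) := by
        rw [hq, Walk.getVert_reverse]
      rcases adj_related hT z (q.adj_getVert_succ (i := 0) (by rw [hq, Walk.length_reverse]; omega)) with h | h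
      · exfalso
        apply hnr
        right
        have hall := step_down_from hT z hp.reverse (by simpa using h : Ancestor T z (q.getVert 0) (q.getVert 1))
        have := chain_anc hT z q (fun k hk1 hk2 => hall k (by omega) hk2) (Nat.zero_le q.length)
        have h0 : q.getVert 0 = r'.t := Walk.getVert_zero q
        have hL : q.getVert q.length = r.s := Walk.getVert_length q
        rwa [h0, hL] at this
      · rw [Walk.getVert_zero, zero_add, hq1] at h
        have hadjq : T.Adj r'.t (q.getVert 1) := by
          have := q.adj_getVert_succ (i := 0) (by rw [hq, Walk.length_reverse]; omega)
          rwa [Walk.getVert_zero, zero_add] at this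
        have hadjq' : T.Adj (p.getVert (p.length - 1)) r'.t := by
          rw [← hq1]; exact hadjq.symm
        exact parent_unique hT z hadjq' h3 h h4

/-- Characterization: a diverging `r'` interferes on `r` iff `s_{r'}⁺` is an
ancestor of `t_r` (when the reception arc of `r` points away from the root). -/
lemma interferesOn_div_iff (r r' : Request T)
    (h1 : T.Adj r'.s r'.sPlus) (h2 : Ancestor T z r'.s r'.sPlus)
    (h3 : T.Adj r.tMinus r.t) (h4 : Ancestor T z r.tMinus r.t) :
    InterferesOn T r' r ↔ Ancestor T z r'.sPlus r.t := by
  constructor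
  · rintro ⟨p, hp, hlen, hv1, hvl⟩
    have hstep0 : Ancestor T z (p.getVert 0) (p.getVert 1) := by
      rcases adj_related hT z (p.adj_getVert_succ (i := 0) (by omega)) with h | h
      · exact h
      · exfalso
        rw [hv1, Walk.getVert_zero] at h
        exact h1.ne (anc_antisymm hT z h2 h)
    have hall := step_down_from hT z hp hstep0 
    have := chain_anc hT z p (i := 1) (fun k hk1 hk2 => hall k (by omega) hk2) hlen
    rw [hv1, Walk.getVert_length] at this
    exact this
  · intro hanc
    have hne : r'.s ≠ r.t := by
      intro h
      exact h1.ne (anc_antisymm hT z h2 (h ▸ hanc))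
    set p := tpath hT r'.s r.t with hpdef
    have hp : p.IsPath := tpath_isPath hT _ _
    have hlen : 1 ≤ p.length := by
      by_contra h
      exact hne (Walk.eq_of_length_eq_zero (p := p) (by omega))
    have hanc_st : Ancestor T z r'.s r.t := anc_trans hT z h2 hanc
    have hall := descend hT z p hp hanc_st
    refine ⟨p, hp, hlen, ?_, ?_⟩
    · have hc1 : Ancestor T z (p.getVert 1) r.t := by
        have := chain_anc hT z p (i := 1) (fun k hk1 hk2 => hall k hk2) hlen
        rwa [Walk.getVert_length] at this
      have hadj : T.Adj r'.s (p.getVert 1) := by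
        have := p.adj_getVert_succ (i := 0) (by omega)
        rwa [Walk.getVert_zero] at this
      have hanc1 : Ancestor T z r'.s (p.getVert 1) := by
        have := hall 0 (by omega)
        simpa using this
      exact child_unique hT z hadj h1 hanc1 h2 hc1 hanc
    · have hstep := hall (p.length - 1) (by omega)
      rw [show p.length - 1 + 1 = p.length by omega, Walk.getVert_length] at hstep
      have hadj : T.Adj (p.getVert (p.length - 1)) r.t := by
        have := p.adj_getVert_succ (i := p.length - 1) (by omega)
        rwa [show p.length - 1 + 1 = p.length by omega, Walk.getVert_length] at this
      exact parent_unique hT z hadj h3 hstep h4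

end TreeAux

/-- Lemma 1(vi): a unimodal request `r` and a diverging request `r'` do not
interfere iff `m_r` is an ancestor of `s_{r'}` and `s_r` and `t_{r'}` are related. -/
theorem unimodal_div_not_interfere_iff {V : Type*} (T : SimpleGraph V) (hT : T.IsTree)
    (z : V) (r r' : Request T) (m : V)
    (hr : Unimodal T z r) (hr' : Diverging T z r')
    (hm : IsMiddle T z r m) :
    ¬ Interfere T r r' ↔ Ancestor T z m r'.s ∧ Related T z r.s r'.t := by
  classical
  obtain ⟨j0, hj1, hj0n, hmj, hup, hdown⟩ := unimodal_structure hT z hr hm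
  have hn1 : 1 ≤ r.toWalk.length := r.one_le_length
  have hl1 : 1 ≤ r'.toWalk.length := r'.one_le_length
  -- basic facts about r
  have hadj_s : T.Adj r.s r.sPlus := by
    have := r.toWalk.adj_getVert_succ (i := 0) (by omega)
    rwa [Walk.getVert_zero, zero_add] at this
  have hanc_us : Ancestor T z r.sPlus r.s := by
    have := hup 0 (by omega)
    rwa [Walk.getVert_zero, zero_add] at this
  have hadj_tr : T.Adj r.tMinus r.t := by
    have := r.toWalk.adj_getVert_succ (i := r.toWalk.length - 1) (by omega)
    rwa [show r.toWalk.length - 1 + 1 = r.toWalk.length by omega, Walk.getVert_length] at this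
  have hanc_tr : Ancestor T z r.tMinus r.t := by
    have := hdown (r.toWalk.length - 1) (by omega) (by omega)
    rwa [show r.toWalk.length - 1 + 1 = r.toWalk.length by omega, Walk.getVert_length] at this
  have hanc_ms : Ancestor T z m r.s := by
    have := chain_anc_up hT z r.toWalk (i := 0) (j := j0)
      (fun k _ hk => hup k hk) (Nat.zero_le _)
    rwa [Walk.getVert_zero, ← hmj] at this
  have hanc_mt : Ancestor T z m r.t := by
    have := chain_anc hT z r.toWalk (i := j0) (j := r.toWalk.length)
      (fun k hk1 hk2 => hdown k hk1 hk2) hj0n.le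
    rwa [Walk.getVert_length, ← hmj] at this
  -- basic facts about r'
  have hadj_s' : T.Adj r'.s r'.sPlus := by
    have := r'.toWalk.adj_getVert_succ (i := 0) (by omega)
    rwa [Walk.getVert_zero, zero_add] at this
  have hanc_s' : Ancestor T z r'.s r'.sPlus := by
    have := hr' 0 (by omega)
    rwa [Walk.getVert_zero, zero_add] at this
  have hadj_t' : T.Adj r'.tMinus r'.t := by
    have := r'.toWalk.adj_getVert_succ (i := r'.toWalk.length - 1) (by omega)
    rwa [show r'.toWalk.length - 1 + 1 = r'.toWalk.length by omega, Walk.getVert_length] at this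
  have hanc_t' : Ancestor T z r'.tMinus r'.t := by
    have := hr' (r'.toWalk.length - 1) (by omega)
    rwa [show r'.toWalk.length - 1 + 1 = r'.toWalk.length by omega, Walk.getVert_length] at this
  have hanc_v1t' : Ancestor T z r'.sPlus r'.t := by
    have := chain_anc hT z r'.toWalk (i := 1) (j := r'.toWalk.length)
      (fun k _ hk => hr' k hk) hl1
    rwa [Walk.getVert_length] at this
  have hanc_s't' : Ancestor T z r'.s r'.t := anc_trans hT z hanc_s' hanc_v1t'
  unfold Interfere
  rw [interferesOn_iff_not_related hT z r r' hadj_s hanc_us hadj_t' hanc_t',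
    interferesOn_div_iff hT z r r' hadj_s' hanc_s' hadj_tr hanc_tr]
  constructor
  · intro h
    push_neg at h
    obtain ⟨hrel, hnv⟩ := h
    refine ⟨?_, hrel⟩
    obtain hst | hts : Ancestor T z r.s r'.t ∨ Ancestor T z r'.t r.s := hrel
    all_goals {
      have hrelms' : Related T z m r'.s := by
        first
        | exact anc_comparable hT z (anc_trans hT z hanc_ms hst) hanc_s't'
        | exact anc_comparable hT z hanc_ms (anc_trans hT z hanc_s't' hts)
      obtain h | h : Ancestor T z m r'.s ∨ Ancestor T z r'.s m := hrelms'
      · exact h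
      · by_cases hms : r'.s = m
        · rw [hms]
          exact anc_refl hT z m
        · exfalso
          have hrelv1m : Related T z r'.sPlus m := by
            first
            | exact anc_comparable hT z hanc_v1t' (anc_trans hT z hanc_ms hst)
            | exact anc_comparable hT z (anc_trans hT z hanc_v1t' hts) hanc_ms
          have hv1m : Ancestor T z r'.sPlus m := by
            obtain h' | h' : Ancestor T z r'.sPlus m ∨ Ancestor T z m r'.sPlus := hrelv1m
            · exact h'
            · have hcc := tpath_concat hT z hanc_s' hadj_s'
              have hmm : m ∈ (tpath hT z r'.sPlus).support := (anc_iff hT z).mp h'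
              rw [hcc, Walk.support_concat, List.mem_append] at hmm
              rcases hmm with hmm | hmm
              · exact absurd (anc_antisymm hT z ((anc_iff hT z).mpr hmm) h).symm hms
              · have hmm' : m = r'.sPlus := by simpa using hmm
                rw [hmm']
                exact anc_refl hT z _
          exact hnv (anc_trans hT z hv1m hanc_mt)
    }
  · rintro ⟨hms', hrel⟩
    rintro (h | h)
    · exact h hrel
    · -- h : Ancestor T z r'.sPlus r.t : contradiction
      have hmne_v1 : m ≠ r'.sPlus := by
        intro he
        have h1 : Ancestor T z r'.s m := by rw [he]; exact hanc_s'
        have h2 : m = r'.s := anc_antisymm hT z hms' h1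
        exact hadj_s'.ne (by rw [← h2, he])
      have hanc_mv1 : Ancestor T z m r'.sPlus := anc_trans hT z hms' hanc_s'
      set P := tpath hT m r'.sPlus with hPdef
      have hP : P.IsPath := tpath_isPath hT _ _
      have hPlen : 1 ≤ P.length := by
        by_contra hc
        exact hmne_v1 (Walk.eq_of_length_eq_zero (p := P) (by omega))
      have hdesc := descend hT z P hP hanc_mv1
      have hadj_mc : T.Adj m (P.getVert 1) := by
        have := P.adj_getVert_succ (i := 0) (by omega)
        rwa [Walk.getVert_zero, zero_add] at this
      have hanc_mc : Ancestor T z m (P.getVert 1) := by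
        have := hdesc 0 (by omega)
        rwa [Walk.getVert_zero, zero_add] at this
      have hanc_cv1 : Ancestor T z (P.getVert 1) r'.sPlus := by
        have := chain_anc hT z P (i := 1) (j := P.length)
          (fun k _ hk => hdesc k hk) hPlen
        rwa [Walk.getVert_length] at this
      have hanc_ct : Ancestor T z (P.getVert 1) r.t := anc_trans hT z hanc_cv1 h
      have hanc_ct' : Ancestor T z (P.getVert 1) r'.t := anc_trans hT z hanc_cv1 hanc_v1t'
      -- the child of m towards r.t
      have hadj_mu : T.Adj m (r.toWalk.getVert (j0+1)) := by
        rw [hmj]; exact r.toWalk.adj_getVert_succ (i := j0) hj0n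
      have hanc_mu : Ancestor T z m (r.toWalk.getVert (j0+1)) := by
        rw [hmj]; exact hdown j0 le_rfl hj0n
      have hanc_ut : Ancestor T z (r.toWalk.getVert (j0+1)) r.t := by
        have := chain_anc hT z r.toWalk (i := j0+1) (j := r.toWalk.length)
          (fun k hk1 hk2 => hdown k (by omega) hk2) (by omega)
        rwa [Walk.getVert_length] at this
      have hc_eq : P.getVert 1 = r.toWalk.getVert (j0+1) :=
        child_unique hT z hadj_mc hadj_mu hanc_mc hanc_mu hanc_ct hanc_ut
      -- the child of m towards r.s
      have hadj_mw : T.Adj m (r.toWalk.getVert (j0-1)) := by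
        have := r.toWalk.adj_getVert_succ (i := j0-1) (by omega)
        rw [show j0-1+1 = j0 by omega] at this
        rw [hmj]; exact this.symm
      have hanc_mw : Ancestor T z m (r.toWalk.getVert (j0-1)) := by
        have := hup (j0-1) (by omega)
        rw [show j0-1+1 = j0 by omega] at this
        rw [hmj]; exact this
      have hanc_ws : Ancestor T z (r.toWalk.getVert (j0-1)) r.s := by
        have := chain_anc_up hT z r.toWalk (i := 0) (j := j0-1)
          (fun k _ hk => hup k (by omega)) (Nat.zero_le _)
        rwa [Walk.getVert_zero] at this
      obtain hst | hts : Ancestor T z r.s r'.t ∨ Ancestor T z r'.t r.s := hrel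
      · have heq : r.toWalk.getVert (j0-1) = P.getVert 1 :=
          child_unique hT z hadj_mw hadj_mc hanc_mw hanc_mc
            (anc_trans hT z hanc_ws hst) hanc_ct'
        rw [hc_eq] at heq
        have := getVert_inj' r.isPath (i := j0-1) (j := j0+1) (by omega) (by omega) heq
        omega
      · have heq : P.getVert 1 = r.toWalk.getVert (j0-1) :=
          child_unique hT z hadj_mc hadj_mw hanc_mc hanc_mw
            (anc_trans hT z hanc_ct' hts) hanc_ws
        rw [hc_eq] at heq
        have := getVert_inj' r.isPath (i := j0+1) (j := j0-1) (by omega) (by omega) heq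
        omega
end
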